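/- Let L be a finite modular lattice, expressed as a subdirect product of subdirectly irreducible (hence simple) modular lattices L₁,…,L_t with smallest-preimage maps σ_i. Then the scaffolding G(L) = ⋃_i σ_i(L_i ∖ {0}) equals the set of sub-irreducible elements of L, i.e., those nonzero x ∈ L all of whose prime quotients x/w (w ⋖ x) are mutually projective. -/

import Mathlib

open Relation


/-- The quotient `q.1/q.2` transposes up to `r.1/r.2`. -/
def TransposedUp {β : Type*} [Lattice β] (q r : β × β) : Prop :=
  q.1 ⊔ r.2 = r.1 ∧ q.1 ⊓ r.2 = q.2

/-- Projectivity of quotients: chain of transpositions. -/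
def ProjectiveQuot {β : Type*} [Lattice β] (q r : β × β) : Prop :=
  Relation.ReflTransGen (fun a b => TransposedUp a b ∨ TransposedUp b a) q r

/-- A lattice congruence: an equivalence relation compatible with `⊔` and `⊓`. -/
def IsLatticeCon {β : Type*} [Lattice β] (r : β → β → Prop) : Prop :=
  Equivalence r ∧ (∀ a b c d, r a b → r c d → r (a ⊔ c) (b ⊔ d)) ∧
    (∀ a b c d, r a b → r c d → r (a ⊓ c) (b ⊓ d))

/-- A simple lattice: nontrivial, and every lattice congruence is trivial or full. -/
def IsSimpleLattice (β : Type*) [Lattice β] : Prop :=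
  Nontrivial β ∧ ∀ r : β → β → Prop, IsLatticeCon r →
    (∀ a b, r a b → a = b) ∨ (∀ a b, r a b)

set_option linter.unusedSectionVars false

section Gen

variable {M : Type*} [Lattice M]

lemma projQuot_trans {q r s : M × M} (h : ProjectiveQuot q r) (h' : ProjectiveQuot r s) :
    ProjectiveQuot q s := Relation.ReflTransGen.trans h h'

lemma projQuot_symm {q r : M × M} (h : ProjectiveQuot q r) : ProjectiveQuot r q :=
  (@Relation.ReflTransGen.stdSymm _ _ ⟨fun _ _ h => h.symm⟩).symm _ _ h

/-- congruences transfer collapsing along a single transposition, both ways -/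
lemma transfer_transposedUp {φ : M → M → Prop} (hφ : IsLatticeCon φ) {q r : M × M}
    (h : TransposedUp q r) : (φ q.1 q.2 ↔ φ r.1 r.2) := by
  obtain ⟨he, hsup, hinf⟩ := hφ
  obtain ⟨h1, h2⟩ := h
  constructor
  · intro hq
    have := hsup _ _ _ _ hq (he.refl r.2)
    rw [h1] at this
    have h22 : q.2 ⊔ r.2 = r.2 := sup_eq_right.2 (h2 ▸ inf_le_right)
    rwa [h22] at this
  · intro hr
    have := hinf _ _ _ _ (he.refl q.1) hr
    have hq1 : q.1 ⊓ r.1 = q.1 := inf_eq_left.2 (h1 ▸ le_sup_left)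
    rwa [hq1, h2] at this

lemma transfer_projQuot {φ : M → M → Prop} (hφ : IsLatticeCon φ) {q r : M × M}
    (h : ProjectiveQuot q r) : (φ q.1 q.2 ↔ φ r.1 r.2) := by
  induction h with
  | refl => rfl
  | tail _ hstep ih =>
    rw [ih]
    cases hstep with
    | inl h => exact transfer_transposedUp hφ h
    | inr h => exact (transfer_transposedUp hφ h).symm

/-- interval lemma for congruences -/
lemma con_interval {φ : M → M → Prop} (hφ : IsLatticeCon φ) {a b c d : M}
    (hab : φ a b) (hac : a ≤ c) (hcb : c ≤ b) (had : a ≤ d) (hdb : d ≤ b) : φ c d := by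
  obtain ⟨he, hsup, hinf⟩ := hφ
  have h1 : φ (c ⊓ d) b := by
    have := hsup _ _ _ _ hab (he.refl (c ⊓ d))
    rwa [sup_eq_right.2 (le_inf hac had), sup_eq_left.2 ((inf_le_left).trans hcb)] at this
  have h2 : φ (c ⊓ d) (c ⊔ d) := by
    have := hinf _ _ _ _ h1 (he.refl (c ⊔ d))
    rwa [inf_eq_left.2 (inf_le_left.trans le_sup_left), inf_eq_right.2 (sup_le hcb hdb)] at this
  have hc : φ c (c ⊔ d) := by
    have := hsup _ _ _ _ h2 (he.refl c)
    rwa [sup_eq_right.2 inf_le_left, sup_eq_left.2 le_sup_left] at this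
  have hd : φ d (c ⊔ d) := by
    have := hsup _ _ _ _ h2 (he.refl d)
    rwa [sup_eq_right.2 inf_le_right, sup_eq_left.2 le_sup_right] at this
  exact he.trans hc (he.symm hd)

lemma exists_covBy_above [Finite M] {s t : M} (h : s < t) : ∃ m, s ⋖ m ∧ m ≤ t := by
  have wf : WellFoundedLT M := Finite.to_wellFoundedLT
  obtain ⟨m, ⟨hm1, hm2⟩, hmin⟩ := wf.wf.has_min {z | s < z ∧ z ≤ t} ⟨t, h, le_rfl⟩
  exact ⟨m, ⟨hm1, fun c hc hlt => hmin c ⟨hc, hlt.le.trans hm2⟩ hlt⟩, hm2⟩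

lemma exists_covBy_below [Finite M] {s t : M} (h : s < t) : ∃ m, s ≤ m ∧ m ⋖ t := by
  have wf : WellFoundedGT M := Finite.to_wellFoundedGT
  obtain ⟨m, ⟨hm1, hm2⟩, hmin⟩ := wf.wf.has_min {z | s ≤ z ∧ z < t} ⟨s, le_rfl, h⟩
  exact ⟨m, hm1, hm2, fun c hc hct => hmin c ⟨hm1.trans hc.le, hct⟩ hc⟩

end Gen

section Mod

variable {M : Type*} [Lattice M] [IsModularLattice M]

lemma cover_sup {a b : M} (hab : a ⋖ b) (d : M) :
    a ⊔ d = b ⊔ d ∨ (a ⊔ d ⋖ b ⊔ d ∧ TransposedUp (b, a) (b ⊔ d, a ⊔ d)) := by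
  by_cases h : b ≤ a ⊔ d
  · left
    exact le_antisymm (sup_le_sup_right hab.le _) (sup_le h (le_sup_right))
  · right
    have hba : b ⊓ (a ⊔ d) = a := by
      rcases hab.eq_or_eq (c := b ⊓ (a ⊔ d)) (le_inf hab.le le_sup_left) inf_le_left with h1 | h1
      · exact h1
      · exact absurd (h1 ▸ inf_le_right : b ≤ a ⊔ d) h
    have hsup : b ⊔ (a ⊔ d) = b ⊔ d := by
      rw [← sup_assoc, sup_eq_left.2 hab.le]
    refine ⟨⟨lt_of_le_of_ne (sup_le_sup_right hab.le _) fun he => h (he ▸ le_sup_left), ?_⟩,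
      hsup, hba⟩
    intro z hz hzb
    have hdz : d ≤ z := le_trans le_sup_right hz.le
    have hz2 : z = d ⊔ (b ⊓ z) := by
      have h1 : (d ⊔ b) ⊓ z = d ⊔ (b ⊓ z) := sup_inf_assoc_of_le b hdz
      have h2 : z ⊓ (b ⊔ d) = z := inf_eq_left.2 hzb.le
      rw [← h1, sup_comm d b, inf_comm, h2]
    have haz : a ≤ b ⊓ z := by
      rw [← hba]; exact inf_le_inf_left _ hz.le
    rcases hab.eq_or_eq haz inf_le_left with h1 | h1
    · exact absurd (by rw [hz2, h1, sup_comm]) hz.ne'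
    · exact absurd (by rw [hz2, h1, sup_comm]) hzb.ne

lemma cover_inf {a b : M} (hab : a ⋖ b) (d : M) :
    a ⊓ d = b ⊓ d ∨ (a ⊓ d ⋖ b ⊓ d ∧ TransposedUp (b ⊓ d, a ⊓ d) (b, a)) := by
  by_cases h : b ⊓ d ≤ a
  · left
    exact le_antisymm (inf_le_inf_right _ hab.le) (le_inf h inf_le_right)
  · right
    have hba : (b ⊓ d) ⊔ a = b := by
      rcases hab.eq_or_eq (c := (b ⊓ d) ⊔ a) le_sup_right (sup_le inf_le_left hab.le) with h1 | h1
      · exact absurd (h1 ▸ le_sup_left : b ⊓ d ≤ a) h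
      · exact h1
    have hinf : (b ⊓ d) ⊓ a = a ⊓ d := by
      rw [inf_assoc, inf_comm d a, ← inf_assoc, inf_eq_right.2 hab.le]
    refine ⟨⟨lt_of_le_of_ne (inf_le_inf_right _ hab.le)
      (fun he => h ((le_of_eq he.symm).trans inf_le_left)), ?_⟩,
      hba, hinf⟩
    · intro z hz hzb
      have hdz : z ≤ d := le_trans hzb.le inf_le_right
      have hz2 : z = d ⊓ (a ⊔ z) := by
        have h1 : (d ⊓ a) ⊔ z = d ⊓ (a ⊔ z) := inf_sup_assoc_of_le a hdz
        have h3 : d ⊓ a ≤ z := by rw [inf_comm]; exact hz.le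
        rw [← h1, sup_eq_right.2 h3]
      have haz : a ⊔ z ≤ b := sup_le hab.le (le_trans hzb.le inf_le_left)
      rcases hab.eq_or_eq (le_sup_left : a ≤ a ⊔ z) haz with h1 | h1
      · exact absurd (by rw [hz2, h1, inf_comm]) hz.ne'
      · exact absurd (by rw [hz2, h1, inf_comm]) hzb.ne

/-- a projective-cover step relative to a reference quotient `q` -/
def PStep (q : M × M) (a b : M) : Prop := a ⋖ b ∧ ProjectiveQuot (b, a) q

def PC (q : M × M) : M → M → Prop := Relation.ReflTransGen (PStep q)

lemma PC.le {q : M × M} {X Y : M} (h : PC q X Y) : X ≤ Y := by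
  induction h with
  | refl => exact le_refl _
  | tail _ hstep ih => exact le_trans ih hstep.1.le

lemma PC.sup {q : M × M} {X Y : M} (h : PC q X Y) (d : M) : PC q (X ⊔ d) (Y ⊔ d) := by
  induction h with
  | refl => exact ReflTransGen.refl
  | @tail b c _ hstep ih =>
    rcases cover_sup hstep.1 d with heq | ⟨hcov, htr⟩
    · rwa [heq] at ih
    · exact ih.tail ⟨hcov, projQuot_trans (ReflTransGen.single (Or.inr htr)) hstep.2⟩

lemma PC.inf {q : M × M} {X Y : M} (h : PC q X Y) (d : M) : PC q (X ⊓ d) (Y ⊓ d) := by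
  induction h with
  | refl => exact ReflTransGen.refl
  | @tail b c _ hstep ih =>
    rcases cover_inf hstep.1 d with heq | ⟨hcov, htr⟩
    · rwa [heq] at ih
    · exact ih.tail ⟨hcov, projQuot_trans (ReflTransGen.single (Or.inl htr)) hstep.2⟩

lemma PC.restrict {q : M × M} {X Y X' Y' : M} (h : PC q X Y) (h1 : X ≤ X') (h2 : X' ≤ Y')
    (h3 : Y' ≤ Y) : PC q X' Y' := by
  have h4 := (h.sup X').inf Y'
  rwa [sup_eq_right.2 h1, sup_eq_left.2 (le_trans h2 h3), inf_eq_left.2 h2,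
    inf_eq_right.2 h3] at h4

/-- the congruence generated by a prime quotient, concretely -/
def RCon (q : M × M) (a b : M) : Prop := PC q (a ⊓ b) (a ⊔ b)

lemma RCon.refl (q : M × M) (a : M) : RCon q a a := by
  unfold RCon; rw [inf_idem, sup_idem]; exact ReflTransGen.refl

lemma RCon.symm {q : M × M} {a b : M} (h : RCon q a b) : RCon q b a := by
  unfold RCon at *; rwa [inf_comm b a, sup_comm b a]

lemma RCon.sup_const {q : M × M} {a b : M} (e : M) (h : RCon q a b) :
    RCon q (a ⊔ e) (b ⊔ e) := by
  have h1 : PC q ((a ⊓ b) ⊔ e) ((a ⊔ b) ⊔ e) := h.sup e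
  exact h1.restrict
    (le_inf (sup_le_sup_right inf_le_left _) (sup_le_sup_right inf_le_right _))
    (inf_le_left.trans le_sup_left)
    (sup_le (sup_le (le_sup_left.trans le_sup_left) le_sup_right)
      (sup_le (le_sup_right.trans le_sup_left) le_sup_right))

lemma RCon.inf_const {q : M × M} {a b : M} (e : M) (h : RCon q a b) :
    RCon q (a ⊓ e) (b ⊓ e) := by
  have h1 : PC q ((a ⊓ b) ⊓ e) ((a ⊔ b) ⊓ e) := h.inf e
  exact h1.restrict
    (le_inf (le_inf (inf_le_left.trans inf_le_left) inf_le_right)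
      (le_inf (inf_le_left.trans inf_le_right) inf_le_right))
    (inf_le_left.trans le_sup_left)
    (sup_le (le_inf (inf_le_left.trans le_sup_left) inf_le_right)
      (le_inf (inf_le_left.trans le_sup_right) inf_le_right))

lemma RCon.trans {q : M × M} {a b c : M} (h1 : RCon q a b) (h2 : RCon q b c) :
    RCon q a c := by
  have s1 : PC q (a ⊓ b ⊓ c) (a ⊓ b) :=
    (h2.inf (a ⊓ b)).restrict
      (le_inf (le_inf (inf_le_right.trans inf_le_left) (inf_le_right.trans inf_le_right))
        (inf_le_left.trans inf_le_right))
      inf_le_left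
      (le_inf (inf_le_right.trans le_sup_left) le_rfl)
  have s2 : PC q (a ⊓ b ⊓ c) (a ⊔ b) := s1.trans h1
  have s3 : PC q (a ⊔ b) (a ⊔ b ⊔ c) :=
    (h2.sup (a ⊔ b)).restrict
      (sup_le (inf_le_left.trans le_sup_right) le_rfl)
      le_sup_left
      (sup_le (sup_le (le_sup_left.trans le_sup_right) (le_sup_right.trans le_sup_right))
        (le_sup_right.trans le_sup_left))
  have s4 : PC q (a ⊓ b ⊓ c) (a ⊔ b ⊔ c) := s2.trans s3
  exact s4.restrict (le_inf (inf_le_left.trans inf_le_left) inf_le_right)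
    (inf_le_left.trans le_sup_left)
    (sup_le (le_sup_left.trans le_sup_left) le_sup_right)

lemma RCon.isLatticeCon (q : M × M) : IsLatticeCon (RCon (M := M) q) := by
  refine ⟨⟨RCon.refl q, RCon.symm, RCon.trans⟩, ?_, ?_⟩
  · intro a b c d h1 h2
    exact (h1.sup_const c).trans (by
      have := h2.sup_const b
      rwa [sup_comm c b, sup_comm d b] at this)
  · intro a b c d h1 h2
    exact (h1.inf_const c).trans (by
      have := h2.inf_const b
      rwa [inf_comm c b, inf_comm d b] at this)

lemma RCon.collapse {q : M × M} (h : q.2 ⋖ q.1) : RCon q q.1 q.2 := by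
  have hpc : PC q q.2 q.1 := ReflTransGen.single ⟨h, ReflTransGen.refl⟩
  unfold RCon
  rwa [inf_comm, inf_eq_left.2 h.le, sup_comm, sup_eq_right.2 h.le]

lemma PC.cover_proj {q : M × M} {a b : M} (h : PC q a b) (hab : a ⋖ b) :
    ProjectiveQuot (b, a) q := by
  rcases h.cases_head with heq | ⟨c, hstep, htail⟩
  · exact absurd heq hab.ne
  · have hcb : c = b := by
      rcases hab.eq_or_eq hstep.1.le (PC.le htail) with h1 | h1
      · exact absurd h1 hstep.1.ne'
      · exact h1
    exact hcb ▸ hstep.2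

/-- minimality ("atom property") of the congruence generated by a prime quotient -/
lemma con_prime_min [Finite M] {p q : M} (hpq : p ⋖ q)
    {φ : M → M → Prop} (hφ : IsLatticeCon φ) (hsub : ∀ a b, φ a b → RCon (q, p) a b)
    {s t : M} (hst : φ s t) (hne : s ≠ t) : φ q p := by
  obtain ⟨he, hsup, hinf⟩ := id hφ
  have hts : φ t s := he.symm hst
  have h1 : φ s (s ⊔ t) := by
    have := hsup _ _ _ _ hst (he.refl s)
    rwa [sup_idem, sup_comm t s] at this
  have h2 : φ t (s ⊔ t) := by
    have := hsup _ _ _ _ hts (he.refl t)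
    rwa [sup_idem, sup_comm s t, sup_comm t s] at this
  have hAB : φ (s ⊓ t) (s ⊔ t) := by
    have := hinf _ _ _ _ h1 h2
    rwa [inf_idem] at this
  have hABne : (s ⊓ t) ≠ (s ⊔ t) := by
    intro hEq
    exact hne (le_antisymm (le_trans le_sup_left (hEq ▸ inf_le_right))
      (le_trans le_sup_right (hEq ▸ inf_le_left)))
  have hABlt : s ⊓ t < s ⊔ t := lt_of_le_of_ne inf_le_sup hABne
  obtain ⟨m, hcov, hmB⟩ := exists_covBy_above hABlt
  have hφAm : φ (s ⊓ t) m := by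
    have := hinf _ _ _ _ hAB (he.refl m)
    rwa [inf_eq_left.2 hcov.le, inf_eq_right.2 hmB] at this
  have hpc : PC (q, p) (s ⊓ t) m := by
    have hr := hsub _ _ hφAm
    unfold RCon at hr
    rwa [inf_eq_left.2 hcov.le, sup_eq_right.2 hcov.le] at hr
  have hproj : ProjectiveQuot (m, s ⊓ t) (q, p) := hpc.cover_proj hcov
  exact (transfer_projQuot hφ hproj).1 (he.symm hφAm)

end Mod

section Push

variable {M N : Type*} [Lattice M] [Lattice N]

lemma pushforward_con (π : M → N)
    (hsup : ∀ a b, π (a ⊔ b) = π a ⊔ π b) (hinf : ∀ a b, π (a ⊓ b) = π a ⊓ π b)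
    (hsurj : Function.Surjective π) {φ : M → M → Prop} (hφ : IsLatticeCon φ) :
    IsLatticeCon (ReflTransGen (fun u v => ∃ c d, φ c d ∧ π c = u ∧ π d = v)) := by
  set r0 : N → N → Prop := fun u v => ∃ c d, φ c d ∧ π c = u ∧ π d = v with hr0
  have r0refl : ∀ u, r0 u u := fun u => by
    obtain ⟨c, hc⟩ := hsurj u
    exact ⟨c, c, hφ.1.refl c, hc, hc⟩
  have r0symm : Symmetric r0 := by
    rintro u v ⟨c, d, h, hc, hd⟩
    exact ⟨d, c, hφ.1.symm h, hd, hc⟩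
  have compat_sup : ∀ {u v u' v'}, r0 u v → r0 u' v' → r0 (u ⊔ u') (v ⊔ v') := by
    rintro u v u' v' ⟨c, d, h, hc, hd⟩ ⟨c', d', h', hc', hd'⟩
    exact ⟨c ⊔ c', d ⊔ d', hφ.2.1 _ _ _ _ h h',
      by rw [hsup, hc, hc'], by rw [hsup, hd, hd']⟩
  have compat_inf : ∀ {u v u' v'}, r0 u v → r0 u' v' → r0 (u ⊓ u') (v ⊓ v') := by
    rintro u v u' v' ⟨c, d, h, hc, hd⟩ ⟨c', d', h', hc', hd'⟩
    exact ⟨c ⊓ c', d ⊓ d', hφ.2.2 _ _ _ _ h h',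
      by rw [hinf, hc, hc'], by rw [hinf, hd, hd']⟩
  have supconst : ∀ {u v : N} (e : N), ReflTransGen r0 u v →
      ReflTransGen r0 (u ⊔ e) (v ⊔ e) := by
    intro u v e h
    induction h with
    | refl => exact ReflTransGen.refl
    | tail _ hstep ih => exact ih.tail (compat_sup hstep (r0refl e))
  have infconst : ∀ {u v : N} (e : N), ReflTransGen r0 u v →
      ReflTransGen r0 (u ⊓ e) (v ⊓ e) := by
    intro u v e h
    induction h with
    | refl => exact ReflTransGen.refl
    | tail _ hstep ih => exact ih.tail (compat_inf hstep (r0refl e))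
  refine ⟨⟨fun u => ReflTransGen.refl, fun h => (@ReflTransGen.stdSymm _ _ ⟨fun _ _ h => r0symm h⟩).symm _ _ h,
    fun h h' => h.trans h'⟩, ?_, ?_⟩
  · intro a b c d h1 h2
    have x1 := supconst c h1
    have x2 := supconst b h2
    rw [sup_comm c b, sup_comm d b] at x2
    exact x1.trans x2
  · intro a b c d h1 h2
    have x1 := infconst c h1
    have x2 := infconst b h2
    rw [inf_comm c b, inf_comm d b] at x2
    exact x1.trans x2

end Push

/-- For a finite modular lattice `L`, subdirect product of subdirectly
irreducible (hence simple) modular lattices `Lᵢ` with smallest-preimage maps `σᵢ`,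
the scaffolding `G(L) = ⋃ᵢ σᵢ(Lᵢ∖{0})` equals the set of sub-irreducible elements
of `L` (nonzero elements all of whose prime quotients are mutually projective). -/
theorem stmt_8 {t : ℕ} {Lf : Fin t → Type*} [∀ i, Lattice (Lf i)] [∀ i, Finite (Lf i)]
    [∀ i, OrderBot (Lf i)] [∀ i, IsModularLattice (Lf i)]
    (hsimple : ∀ i, IsSimpleLattice (Lf i))
    (L : Sublattice (∀ i, Lf i)) [IsModularLattice L]
    (hsurj : ∀ i, Function.Surjective fun x : L => x.val i)
    (σ : ∀ j, Lf j → L)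
    (hσ : ∀ j (y : Lf j), IsLeast {x : L | x.val j = y} (σ j y))
    (G : Set L) (hG : G = ⋃ i, σ i '' {y : Lf i | y ≠ ⊥}) :
    G = {x : L | ¬ IsMin x ∧
          ∀ w w' : L, w ⋖ x → w' ⋖ x → ProjectiveQuot (x, w) (x, w')} := by
  subst hG
  have csup : ∀ (a b : L) (j : Fin t), (a ⊔ b).val j = a.val j ⊔ b.val j := fun _ _ _ => rfl
  have cinf : ∀ (a b : L) (j : Fin t), (a ⊓ b).val j = a.val j ⊓ b.val j := fun _ _ _ => rfl
  have cle : ∀ {a b : L}, a ≤ b → ∀ j, a.val j ≤ b.val j := fun h j => h j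
  have hσc : ∀ (j) (u : Lf j), (σ j u).val j = u := fun j u => (hσ j u).1
  have hσmin : ∀ (j) (u : Lf j) (z : L), z.val j = u → σ j u ≤ z := fun j u z hz =>
    (hσ j u).2 hz
  have hmono : ∀ (j) (u v : Lf j), u ≤ v → σ j u ≤ σ j v := by
    intro j u v huv
    have h1 : (σ j u ⊓ σ j v).val j = u := by
      rw [cinf, hσc, hσc, inf_eq_left.2 huv]
    exact le_trans (hσmin j u _ h1) inf_le_right
  ext x
  simp only [Set.mem_iUnion, Set.mem_image, Set.mem_setOf_eq]
  constructor
  · rintro ⟨i, y, hy, hxy⟩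
    have hxc : x.val i = y := by rw [← hxy]; exact hσc i y
    have hxmin : ∀ z : L, z.val i = y → x ≤ z := fun z hz => hxy ▸ hσmin i y z hz
    have hdrop : ∀ w : L, w ⋖ x → w.val i < y := by
      intro w hw
      refine lt_of_le_of_ne (hxc ▸ cle hw.le i) fun hEq => ?_
      exact hw.lt.ne (le_antisymm hw.le (hxmin w hEq))
    constructor
    · intro hm
      have h1 : σ i ⊥ ≤ x := hxy ▸ hmono i ⊥ y bot_le
      have h2 : x ≤ σ i ⊥ := hm h1
      have h3 : y ≤ ⊥ := by
        calc y = x.val i := hxc.symm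
        _ ≤ (σ i ⊥).val i := cle h2 i
        _ = ⊥ := hσc i ⊥
      exact hy (le_bot_iff.1 h3)
    · intro w w' hw hw'
      have hRxw' : RCon (x, w') x w' := RCon.collapse (q := (x, w')) hw'
      have hrcon := pushforward_con (fun z : L => z.val i) (fun a b => csup a b i)
        (fun a b => cinf a b i) (hsurj i) (RCon.isLatticeCon (M := L) (x, w'))
      rcases (hsimple i).2 _ hrcon with htriv | hfull
      · exfalso
        have hstep : ReflTransGen
            (fun u v => ∃ c d : L, RCon (x, w') c d ∧ c.val i = u ∧ d.val i = v)
            (w'.val i) (x.val i) :=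
          ReflTransGen.single ⟨w', x, RCon.symm hRxw', rfl, rfl⟩
        have := htriv _ _ hstep
        rw [hxc] at this
        exact (hdrop w' hw').ne this
      · -- full congruence on Lf i
        have hRwx : RCon (x, w') w x := by
          by_contra hnR
          -- triviality of the intersection congruence
          have conj : IsLatticeCon (fun a b : L => RCon (x, w') a b ∧ RCon (x, w) a b) := by
            obtain ⟨e1, s1, i1⟩ := RCon.isLatticeCon (M := L) (x, w')
            obtain ⟨e2, s2, i2⟩ := RCon.isLatticeCon (M := L) (x, w)
            exact ⟨⟨fun a => ⟨e1.refl a, e2.refl a⟩,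
              fun h => ⟨e1.symm h.1, e2.symm h.2⟩,
              fun h h' => ⟨e1.trans h.1 h'.1, e2.trans h.2 h'.2⟩⟩,
              fun a b c d h h' => ⟨s1 _ _ _ _ h.1 h'.1, s2 _ _ _ _ h.2 h'.2⟩,
              fun a b c d h h' => ⟨i1 _ _ _ _ h.1 h'.1, i2 _ _ _ _ h.2 h'.2⟩⟩
          have htriv2 : ∀ p1 p2 : L, RCon (x, w') p1 p2 → RCon (x, w) p1 p2 → p1 = p2 := by
            intro p1 p2 hA hB
            by_contra hne
            have hqp := con_prime_min (M := L) hw conj (fun a b h => h.2) ⟨hA, hB⟩ hne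
            exact hnR (RCon.symm hqp.1)
          -- the chain from w to x
          have hlift : ∀ {u v : Lf i},
              ReflTransGen (fun u v => ∃ c d : L, RCon (x, w') c d ∧ c.val i = u ∧ d.val i = v)
                u v →
              ∀ a b : L, a.val i = u → b.val i = v →
              ReflTransGen (fun a b : L => a.val i = b.val i ∨ RCon (x, w') a b) a b := by
            intro u v h
            induction h with
            | refl =>
              intro a b ha hb
              exact ReflTransGen.single (Or.inl (ha.trans hb.symm))
            | tail _ hstep ih =>
              intro a b ha hb
              obtain ⟨c, d, hcd, hc, hd⟩ := hstep
              exact ((ih a c ha hc).tail (Or.inr hcd)).tail (Or.inl (hd.trans hb.symm))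
          have hchain := hlift (hfull (w.val i) (x.val i)) w x rfl rfl
          have hmain : ∀ z : L,
              ReflTransGen (fun a b : L => a.val i = b.val i ∨ RCon (x, w') a b) w z →
              ((z ⊔ w) ⊓ x).val i = w.val i := by
            intro z h
            induction h with
            | refl =>
              rw [sup_idem, inf_eq_left.2 hw.le]
            | @tail b c _ hstep ih =>
              cases hstep with
              | inl hco =>
                rw [cinf, csup, ← hco, ← csup, ← cinf]
                exact ih
              | inr hR =>
                have fbfc : RCon (x, w') ((b ⊔ w) ⊓ x) ((c ⊔ w) ⊓ x) :=
                  (hR.sup_const w).inf_const x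
                have hR'wx : RCon (x, w) w x := RCon.symm (RCon.collapse (q := (x, w)) hw)
                have fb' : RCon (x, w) ((b ⊔ w) ⊓ x) ((c ⊔ w) ⊓ x) :=
                  con_interval (RCon.isLatticeCon _) hR'wx
                    (le_inf le_sup_right hw.le) inf_le_right
                    (le_inf le_sup_right hw.le) inf_le_right
                have heq := htriv2 _ _ fbfc fb'
                rw [← heq]
                exact ih
          have hfin := hmain x hchain
          rw [sup_eq_left.2 hw.le, inf_idem, hxc] at hfin
          exact (hdrop w hw).ne hfin.symm
        -- conclude projectivity
        have hpc : PC (x, w') w x := by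
          have h0 := hRwx
          unfold RCon at h0
          rwa [inf_eq_left.2 hw.le, sup_eq_right.2 hw.le] at h0
        exact hpc.cover_proj hw
  · rintro ⟨hnmin, hproj⟩
    obtain ⟨z0, hz0⟩ := not_isMin_iff.1 hnmin
    obtain ⟨w, hz0w, hw⟩ := exists_covBy_below hz0
    have hwx : ∃ j, w.val j ≠ x.val j := by
      by_contra h
      push_neg at h
      exact hw.lt.ne (Subtype.ext (funext h))
    obtain ⟨j, hj⟩ := hwx
    have hjlt : w.val j < x.val j := lt_of_le_of_ne (cle hw.le j) hj
    have hσx : σ j (x.val j) ≤ x := hσmin j _ x rfl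
    have hEq : σ j (x.val j) = x := by
      by_contra hne
      have hlt : σ j (x.val j) < x := lt_of_le_of_ne hσx hne
      obtain ⟨w', hle', hw'⟩ := exists_covBy_below hlt
      have hw'j : w'.val j = x.val j := by
        refine le_antisymm (cle hw'.le j) ?_
        calc x.val j = (σ j (x.val j)).val j := (hσc j _).symm
        _ ≤ w'.val j := cle hle' j
      have θcon : IsLatticeCon (fun a b : L => a.val j = b.val j) := by
        refine ⟨⟨fun _ => rfl, Eq.symm, Eq.trans⟩, ?_, ?_⟩
        · intro a b c d h1 h2
          rw [csup, csup, h1, h2]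
        · intro a b c d h1 h2
          rw [cinf, cinf, h1, h2]
      have := (transfer_projQuot θcon (hproj w w' hw hw')).2 hw'j.symm
      exact hj this.symm
    have hbot : x.val j ≠ ⊥ := by
      intro hb
      have h1 : σ j (x.val j) ≤ z0 := by
        calc σ j (x.val j) = σ j ⊥ := by rw [hb]
        _ ≤ σ j (z0.val j) := hmono j _ _ bot_le
        _ ≤ z0 := hσmin j _ z0 rfl
      rw [hEq] at h1
      exact absurd (lt_of_le_of_lt h1 hz0) (lt_irrefl x)
    exact ⟨j, x.val j, hbot, hEq⟩
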